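/- For all flags φ, ψ, the product φψ is again a flag, and φ ≤ φψ and ψ ≤ φψ. -/

import Mathlib

open scoped Classical
open Set

variable {L : Type*} [LieRing L] [LieAlgebra ℝ L] [FiniteDimensional ℝ L]

/-- A flag: a nonempty chain of Lie subalgebras, each strictly containing `H`. -/
def IsFlag (H : LieSubalgebra ℝ L) (s : Finset (LieSubalgebra ℝ L)) : Prop :=
  s.Nonempty ∧ IsChain (· ≤ ·) (s : Set (LieSubalgebra ℝ L)) ∧ ∀ K ∈ s, H < K

/-- The maximum of a flag. -/
noncomputable def flagMax (s : Finset (LieSubalgebra ℝ L)) : LieSubalgebra ℝ L :=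
  sSup (s : Set (LieSubalgebra ℝ L))

/-- An elementary move between flags. -/
def FlagStep (H : LieSubalgebra ℝ L) (s t : Finset (LieSubalgebra ℝ L)) : Prop :=
  IsFlag H s ∧ IsFlag H t ∧
    ((∃ K : LieSubalgebra ℝ L, flagMax s < K ∧ t = insert K s) ∨
      (∃ K ∈ s, K ≠ flagMax s ∧ t = s.erase K))

/-- The partial order on flags. -/
def FlagLE (H : LieSubalgebra ℝ L) (s t : Finset (LieSubalgebra ℝ L)) : Prop :=
  Relation.ReflTransGen (FlagStep H) s t

/-- The product of two flags. -/
noncomputable def flagProd (s t : Finset (LieSubalgebra ℝ L)) : Finset (LieSubalgebra ℝ L) :=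
  if ∃ K ∈ s, flagMax t < K then (s ∩ t) ∪ s.filter (fun K => flagMax t < K)
  else if ∃ K ∈ t, flagMax s < K then (s ∩ t) ∪ t.filter (fun K => flagMax s < K)
  else insert (flagMax s ⊔ flagMax t) (s ∩ t)

/-! Auxiliary lemmas -/

lemma le_flagMax {s : Finset (LieSubalgebra ℝ L)} {K : LieSubalgebra ℝ L} (hK : K ∈ s) :
    K ≤ flagMax s :=
  le_sSup (by exact_mod_cast hK)

lemma flagMax_mem {s : Finset (LieSubalgebra ℝ L)} (hne : s.Nonempty)
    (hc : IsChain (· ≤ ·) (s : Set (LieSubalgebra ℝ L))) : flagMax s ∈ s := by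
  obtain ⟨m, hm, hmax'⟩ := Finset.exists_maximal hne
  have hmax : ∀ x ∈ s, ¬ m < x := fun x hx hlt => hlt.2 (hmax' hx hlt.le)
  have : flagMax s = m := by
    refine le_antisymm (sSup_le ?_) (le_flagMax hm)
    rintro x hx
    rcases eq_or_ne x m with rfl | hxm
    · exact le_rfl
    · rcases hc hx (by exact_mod_cast hm) hxm with h | h
      · exact h
      · exact absurd (lt_of_le_of_ne h (Ne.symm hxm)) (hmax x (by exact_mod_cast hx))
  rw [this]; exact hm

lemma flagMax_eq_of_subset {u s : Finset (LieSubalgebra ℝ L)} (hu : u ⊆ s)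
    (h : flagMax s ∈ u) : flagMax u = flagMax s :=
  le_antisymm (sSup_le_sSup (by exact_mod_cast hu)) (le_flagMax h)

lemma flagLE_subset (H : LieSubalgebra ℝ L) :
    ∀ s : Finset (LieSubalgebra ℝ L), IsFlag H s →
      ∀ u ⊆ s, flagMax s ∈ u → IsFlag H u ∧ FlagLE H s u := by
  intro s
  induction s using Finset.strongInduction with
  | _ s ih =>
    intro hs u hu hmem
    by_cases heq : u = s
    · subst heq; exact ⟨hs, Relation.ReflTransGen.refl⟩
    · obtain ⟨K, hKs, hKu⟩ : ∃ K ∈ s, K ∉ u := by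
        by_contra h
        push_neg at h
        exact heq (Finset.Subset.antisymm hu h)
      have hKmax : K ≠ flagMax s := fun h => hKu (h ▸ hmem)
      have hmaxs : flagMax s ∈ s := hu hmem
      have hmax' : flagMax s ∈ s.erase K := Finset.mem_erase.mpr ⟨Ne.symm hKmax, hmaxs⟩
      have hsub : s.erase K ⊆ s := Finset.erase_subset K s
      have hflag' : IsFlag H (s.erase K) :=
        ⟨⟨_, hmax'⟩, hs.2.1.mono (by exact_mod_cast hsub),
          fun J hJ => hs.2.2 J (hsub hJ)⟩
      have hstep : FlagStep H s (s.erase K) :=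
        ⟨hs, hflag', Or.inr ⟨K, hKs, hKmax, rfl⟩⟩
      have hu' : u ⊆ s.erase K := fun x hx =>
        Finset.mem_erase.mpr ⟨fun h => hKu (h ▸ hx), hu hx⟩
      have hmem' : flagMax (s.erase K) ∈ u := by
        rw [flagMax_eq_of_subset hsub hmax']; exact hmem
      obtain ⟨h1, h2⟩ := ih (s.erase K) (Finset.erase_ssubset hKs) hflag' u hu' hmem'
      exact ⟨h1, Relation.ReflTransGen.head hstep h2⟩

lemma flagLE_union (H : LieSubalgebra ℝ L) {t : Finset (LieSubalgebra ℝ L)} (ht : IsFlag H t) :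
    ∀ F : Finset (LieSubalgebra ℝ L), IsChain (· ≤ ·) (F : Set (LieSubalgebra ℝ L)) →
      (∀ K ∈ F, flagMax t < K) → IsFlag H (t ∪ F) ∧ FlagLE H t (t ∪ F) := by
  intro F
  induction F using Finset.strongInduction with
  | _ F ih =>
    intro hFc hFgt
    rcases F.eq_empty_or_nonempty with rfl | hne
    · simpa using ⟨ht, Relation.ReflTransGen.refl⟩
    · set m := flagMax F with hm_def
      have hmF : m ∈ F := flagMax_mem hne hFc
      set F' := F.erase m with hF'_def
      have hsubF : F' ⊆ F := Finset.erase_subset m F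
      obtain ⟨hflag', hle'⟩ := ih F' (Finset.erase_ssubset hmF)
        (hFc.mono (by exact_mod_cast hsubF)) (fun K hK => hFgt K (hsubF hK))
      have htm : flagMax t < m := hFgt m hmF
      have hlt : ∀ x ∈ t ∪ F', x < m := by
        intro x hx
        rcases Finset.mem_union.mp hx with hx | hx
        · exact lt_of_le_of_lt (le_flagMax hx) htm
        · exact lt_of_le_of_ne (le_flagMax (hsubF hx)) (Finset.mem_erase.mp hx).1
      have hmaxlt : flagMax (t ∪ F') < m :=
        hlt _ (flagMax_mem hflag'.1 hflag'.2.1)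
      have hunion : t ∪ F = insert m (t ∪ F') := by
        rw [hF'_def, ← Finset.union_insert, Finset.insert_erase hmF]
      have hflagU : IsFlag H (t ∪ F) := by
        rw [hunion]
        refine ⟨Finset.insert_nonempty _ _, ?_, ?_⟩
        · rw [Finset.coe_insert]
          exact hflag'.2.1.insert (fun b hb _ => Or.inr (hlt b (by exact_mod_cast hb)).le)
        · intro K hK
          rcases Finset.mem_insert.mp hK with rfl | hK
          · exact lt_trans (ht.2.2 _ (flagMax_mem ht.1 ht.2.1)) htm
          · exact hflag'.2.2 K hK
      have hstep : FlagStep H (t ∪ F') (t ∪ F) :=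
        ⟨hflag', hflagU, Or.inl ⟨m, hmaxlt, hunion⟩⟩
      exact ⟨hflagU, hle'.tail hstep⟩

lemma flag_case1 (H : LieSubalgebra ℝ L) {s t : Finset (LieSubalgebra ℝ L)}
    (hs : IsFlag H s) (ht : IsFlag H t) (h : ∃ K ∈ s, flagMax t < K) :
    IsFlag H ((s ∩ t) ∪ s.filter (fun K => flagMax t < K)) ∧
      FlagLE H s ((s ∩ t) ∪ s.filter (fun K => flagMax t < K)) ∧
      FlagLE H t ((s ∩ t) ∪ s.filter (fun K => flagMax t < K)) := by
  obtain ⟨K₀, hK₀s, hK₀lt⟩ := h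
  set F := s.filter (fun K => flagMax t < K) with hF_def
  set P := (s ∩ t) ∪ F with hP_def
  have hK₀F : K₀ ∈ F := Finset.mem_filter.mpr ⟨hK₀s, hK₀lt⟩
  have hPs : P ⊆ s :=
    Finset.union_subset (Finset.inter_subset_left) (Finset.filter_subset _ _)
  have hMs : flagMax s ∈ s := flagMax_mem hs.1 hs.2.1
  have hMsP : flagMax s ∈ P := by
    refine Finset.mem_union_right _ (Finset.mem_filter.mpr ⟨hMs, ?_⟩)
    exact lt_of_lt_of_le hK₀lt (le_flagMax hK₀s)
  obtain ⟨hPflag, hsP⟩ := flagLE_subset H s hs P hPs hMsP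
  -- from t
  obtain ⟨hUflag, htU⟩ := flagLE_union H ht F
    (hs.2.1.mono (by exact_mod_cast Finset.filter_subset _ s))
    (fun K hK => (Finset.mem_filter.mp hK).2)
  have hPU : P ⊆ t ∪ F :=
    Finset.union_subset
      (fun x hx => Finset.mem_union_left _ (Finset.mem_inter.mp hx).2)
      (Finset.subset_union_right)
  have hMU : flagMax (t ∪ F) ∈ P := by
    have hmem : flagMax (t ∪ F) ∈ t ∪ F := flagMax_mem hUflag.1 hUflag.2.1
    rcases Finset.mem_union.mp hmem with hx | hx
    · exact absurd (le_flagMax hx)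
        (not_le_of_gt (lt_of_lt_of_le hK₀lt (le_flagMax (Finset.mem_union_right _ hK₀F))))
    · exact Finset.mem_union_right _ hx
  obtain ⟨_, htP⟩ := flagLE_subset H (t ∪ F) hUflag P hPU hMU
  exact ⟨hPflag, hsP, htU.trans htP⟩

-- STATEMENT 3
theorem flagProd_isFlag_and_le (H : LieSubalgebra ℝ L) (hprop : H ≠ ⊤)
    (s t : Finset (LieSubalgebra ℝ L)) (hs : IsFlag H s) (ht : IsFlag H t) :
    IsFlag H (flagProd s t) ∧ FlagLE H s (flagProd s t) ∧ FlagLE H t (flagProd s t) := by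
  unfold flagProd
  split_ifs with h1 h2
  · exact flag_case1 H hs ht h1
  · have := flag_case1 H ht hs h2
    rw [Finset.inter_comm] at this
    exact ⟨this.1, this.2.2, this.2.1⟩
  · have hMs : flagMax s ∈ s := flagMax_mem hs.1 hs.2.1
    have hMt : flagMax t ∈ t := flagMax_mem ht.1 ht.2.1
    rcases eq_or_ne (flagMax s) (flagMax t) with heq | hne
    · have hsup : flagMax s ⊔ flagMax t = flagMax s := by rw [heq, sup_idem]
      have hMst : flagMax s ∈ s ∩ t := Finset.mem_inter.mpr ⟨hMs, heq ▸ hMt⟩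
      have hins : insert (flagMax s ⊔ flagMax t) (s ∩ t) = s ∩ t := by
        rw [hsup]; exact Finset.insert_eq_self.mpr hMst
      rw [hins]
      obtain ⟨h1', h2'⟩ := flagLE_subset H s hs (s ∩ t) Finset.inter_subset_left hMst
      obtain ⟨_, h3'⟩ := flagLE_subset H t ht (s ∩ t) Finset.inter_subset_right
        (by rw [← heq]; exact hMst)
      exact ⟨h1', h2', h3'⟩
    · set J := flagMax s ⊔ flagMax t with hJ_def
      have hsJ : flagMax s < J := by
        rcases lt_or_eq_of_le (le_sup_left : flagMax s ≤ J) with h | h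
        · exact h
        · exfalso
          have : flagMax t ≤ flagMax s := by rw [h]; exact le_sup_right
          rcases lt_or_eq_of_le this with h' | h'
          · exact h1 ⟨flagMax s, hMs, h'⟩
          · exact hne h'.symm
      have htJ : flagMax t < J := by
        rcases lt_or_eq_of_le (le_sup_right : flagMax t ≤ J) with h | h
        · exact h
        · exfalso
          have : flagMax s ≤ flagMax t := by rw [h]; exact le_sup_left
          rcases lt_or_eq_of_le this with h' | h'
          · exact h2 ⟨flagMax t, hMt, h'⟩
          · exact hne h'
      -- from a flag u with flagMax u < J and s ∩ t ⊆ u, we get the chain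
      have main : ∀ u : Finset (LieSubalgebra ℝ L), IsFlag H u → flagMax u < J →
          s ∩ t ⊆ u →
          IsFlag H (insert J (s ∩ t)) ∧ FlagLE H u (insert J (s ∩ t)) := by
        intro u hu huJ hsub
        have hJu : IsFlag H (insert J u) := by
          refine ⟨Finset.insert_nonempty _ _, ?_, ?_⟩
          · rw [Finset.coe_insert]
            exact hu.2.1.insert (fun b hb _ =>
              Or.inr ((le_flagMax (by exact_mod_cast hb)).trans huJ.le))
          · intro K hK
            rcases Finset.mem_insert.mp hK with rfl | hK
            · exact lt_trans (hu.2.2 _ (flagMax_mem hu.1 hu.2.1)) huJ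
            · exact hu.2.2 K hK
        have hstep : FlagStep H u (insert J u) := ⟨hu, hJu, Or.inl ⟨J, huJ, rfl⟩⟩
        have hmaxJu : flagMax (insert J u) = J := by
          rw [flagMax, Finset.coe_insert, sSup_insert]
          exact sup_eq_left.mpr (sSup_le fun x hx => (le_flagMax (by exact_mod_cast hx)).trans huJ.le)
        obtain ⟨hf, hle⟩ := flagLE_subset H (insert J u) hJu (insert J (s ∩ t))
          (Finset.insert_subset_insert _ hsub)
          (by rw [hmaxJu]; exact Finset.mem_insert_self _ _)
        exact ⟨hf, Relation.ReflTransGen.head hstep hle⟩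
      obtain ⟨hf, hsle⟩ := main s hs hsJ Finset.inter_subset_left
      obtain ⟨_, htle⟩ := main t ht htJ Finset.inter_subset_right
      exact ⟨hf, hsle, htle⟩
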